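/- arXiv:2202.13143 — 2 statements merged into one kernel-verified Lean document; each statement's English description precedes it below -/
import Mathlib

section
/- Let n be an odd square. Then D_{S(n)*} = 5. -/
/-- The set of squares of units of `ZMod n`. -/
def unitSquares (n : ℕ) : Set (ZMod n) :=
  {x | ∃ u : (ZMod n)ˣ, (u : ZMod n) ^ 2 = x}

/-- The set of nonzero squares of `ZMod n`. -/
def nonzeroSquares (n : ℕ) : Set (ZMod n) :=
  {x | x ≠ 0 ∧ ∃ y : ZMod n, y ^ 2 = x}

/-- A (nonempty) sequence is an `A`-weighted zero-sum sequence. -/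
def IsWeightedZeroSum {n k : ℕ} (A : Set (ZMod n)) (x : Fin k → ZMod n) : Prop :=
  0 < k ∧ ∃ w : Fin k → ZMod n, (∀ i, w i ∈ A) ∧ ∑ i, w i * x i = 0

/-- The sequence `x` has an `A`-weighted zero-sum subsequence. -/
def HasWZSSubseq {n k : ℕ} (A : Set (ZMod n)) (x : Fin k → ZMod n) : Prop :=
  ∃ I : Finset (Fin k), I.Nonempty ∧ ∃ w : Fin k → ZMod n,
    (∀ i ∈ I, w i ∈ A) ∧ ∑ i ∈ I, w i * x i = 0

/-- The sequence `x` has an `A`-weighted zero-sum subsequence of consecutive terms. -/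
def HasConsecWZS {n k : ℕ} (A : Set (ZMod n)) (x : Fin k → ZMod n) : Prop :=
  ∃ i j : Fin k, i ≤ j ∧ ∃ w : Fin k → ZMod n,
    (∀ t ∈ Finset.Icc i j, w t ∈ A) ∧ ∑ t ∈ Finset.Icc i j, w t * x t = 0

/-- `k` is admissible for the `A`-weighted Davenport constant of `ZMod n`. -/
def DConst (n : ℕ) (A : Set (ZMod n)) (k : ℕ) : Prop :=
  0 < k ∧ ∀ x : Fin k → ZMod n, HasWZSSubseq A x

/-- `k` is admissible for the constant `C_A` of `ZMod n`. -/
def CConst (n : ℕ) (A : Set (ZMod n)) (k : ℕ) : Prop :=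
  0 < k ∧ ∀ x : Fin k → ZMod n, HasConsecWZS A x



/-- Binary CRT over ℤ with natural coprime moduli. -/
lemma crt2 {a b : ℕ} (h : Nat.Coprime a b) (r1 r2 : ℤ) :
    ∃ x : ℤ, (a:ℤ) ∣ x - r1 ∧ (b:ℤ) ∣ x - r2 := by
  obtain ⟨u, v, huv⟩ := (Nat.isCoprime_iff_coprime.mpr h)
  refine ⟨r2 * u * a + r1 * v * b, ⟨r2 * u - (r1 * u), ?_⟩, ⟨r1 * v - r2 * v, ?_⟩⟩
  · have : r1 = r1 * (u * a + v * b) := by rw [huv]; ring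
    nlinarith [this]
  · have : r2 = r2 * (u * a + v * b) := by rw [huv]; ring
    nlinarith [this]

/-- CRT over a finset of pairwise coprime moduli. -/
lemma crtFinset (S : Finset ℕ) (M : ℕ → ℕ) (r : ℕ → ℤ)
    (hco : ∀ a ∈ S, ∀ b ∈ S, a ≠ b → Nat.Coprime (M a) (M b)) :
    ∃ x : ℤ, ∀ a ∈ S, (M a : ℤ) ∣ x - r a := by
  classical
  induction S using Finset.induction with
  | empty => exact ⟨0, by simp⟩
  | insert a S hnotmem ih =>
    obtain ⟨y, hy⟩ := ih (fun c hc d hd hcd => hco c (Finset.mem_insert_of_mem hc) d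
      (Finset.mem_insert_of_mem hd) hcd)
    have hcop : Nat.Coprime (M a) (∏ c ∈ S, M c) := by
      refine Nat.Coprime.prod_right fun c hc => ?_
      exact hco a (Finset.mem_insert_self a S) c (Finset.mem_insert_of_mem hc)
        (by rintro rfl; exact hnotmem hc)
    obtain ⟨x, hx1, hx2⟩ := crt2 hcop (r a) y
    refine ⟨x, fun c hc => ?_⟩
    rcases Finset.mem_insert.mp hc with rfl | hc
    · exact hx1
    · have h1 : (M c : ℤ) ∣ x - y := by
        refine dvd_trans ?_ hx2
        exact_mod_cast Int.natCast_dvd_natCast.mpr (Finset.dvd_prod_of_mem M hc)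
      have := hy c hc
      have : (M c : ℤ) ∣ (x - y) + (y - r c) := dvd_add h1 this
      simpa using this

/-- valuation decomposition over ℤ -/
lemma valDecomp {p : ℕ} (hp : p.Prime) {y : ℤ} (hy : y ≠ 0) :
    ∃ (v : ℕ) (u : ℤ), y = (p:ℤ)^v * u ∧ ¬ (p:ℤ) ∣ u := by
  obtain ⟨e, n', hn', hna⟩ := Nat.exists_eq_pow_mul_and_not_dvd
    (Int.natAbs_ne_zero.mpr hy) p hp.ne_one
  rcases Int.natAbs_eq y with h | h
  · exact ⟨e, n', by rw [h, hna]; push_cast; ring,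
      fun hd => hn' (Int.ofNat_dvd.mp (by exact_mod_cast hd))⟩
  · exact ⟨e, -(n':ℤ), by rw [h, hna]; push_cast; ring,
      fun hd => hn' (Int.ofNat_dvd.mp (by exact_mod_cast (dvd_neg.mp hd)))⟩

lemma valDecompLt {p : ℕ} (hp : p.Prime) {e : ℕ} {y : ℤ} (hy : ¬ (p:ℤ)^e ∣ y) :
    ∃ (v : ℕ) (u : ℤ), v < e ∧ y = (p:ℤ)^v * u ∧ ¬ (p:ℤ) ∣ u := by
  have hy0 : y ≠ 0 := by rintro rfl; exact hy (dvd_zero _)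
  obtain ⟨v, u, h1, h2⟩ := valDecomp hp hy0
  refine ⟨v, u, ?_, h1, h2⟩
  by_contra h
  push_neg at h
  exact hy (h1 ▸ Dvd.dvd.mul_right (pow_dvd_pow _ h) u)

/-- key non-divisibility: p^e ∤ p^k * u when k < e and p ∤ u -/
lemma notDvdPowMul {p : ℕ} (hp : p.Prime) {e k : ℕ} (hk : k < e) {u : ℤ}
    (hu : ¬ (p:ℤ) ∣ u) : ¬ (p:ℤ)^e ∣ (p:ℤ)^k * u := by
  intro h
  have hpz : ((p:ℤ))^k ≠ 0 := pow_ne_zero _ (by exact_mod_cast hp.ne_zero)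
  have h1 : (p:ℤ)^(k+1) ∣ (p:ℤ)^k * u := dvd_trans (pow_dvd_pow _ hk) h
  rw [pow_succ] at h1
  exact hu ((mul_dvd_mul_iff_left hpz).mp h1)

lemma notDvdPowMulSq {p : ℕ} (hp : p.Prime) {e k : ℕ} (hk : k < e) {u : ℤ}
    (hu : ¬ (p:ℤ) ∣ u) : ¬ (p:ℤ)^e ∣ (p:ℤ)^k * u^2 := by
  refine notDvdPowMul hp hk (fun h => hu ?_)
  exact (Int.Prime.dvd_pow' (by exact_mod_cast hp) h)


lemma intCast_val_dvd_iff {p : ℕ} [NeZero p] (b : ZMod p) :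
    ((b.val : ℤ) : ZMod p) = b := by
  push_cast
  rw [ZMod.natCast_val, ZMod.cast_id]

/-- Hensel lifting of square roots mod odd prime powers. -/
lemma henselSq {p : ℕ} (hp : p.Prime) (hodd : p ≠ 2) {a : ℤ} (ha : ¬ (p:ℤ) ∣ a)
    (hsq : IsSquare ((a : ZMod p))) (f : ℕ) :
    ∃ z : ℤ, ¬ (p:ℤ) ∣ z ∧ (p:ℤ)^f ∣ z^2 - a := by
  haveI : Fact p.Prime := ⟨hp⟩
  have main : ∀ g : ℕ, 1 ≤ g → ∃ z : ℤ, ¬ (p:ℤ) ∣ z ∧ (p:ℤ)^g ∣ z^2 - a := by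
    intro g hg
    induction g, hg using Nat.le_induction with
    | base =>
      obtain ⟨b, hb⟩ := hsq
      have hz : ¬ (p:ℤ) ∣ (b.val : ℤ) := by
        rw [← ZMod.intCast_zmod_eq_zero_iff_dvd, intCast_val_dvd_iff]
        intro h0
        rw [h0, mul_zero] at hb
        exact ha ((ZMod.intCast_zmod_eq_zero_iff_dvd a p).mp hb)
      refine ⟨(b.val : ℤ), hz, ?_⟩
      rw [pow_one, ← ZMod.intCast_zmod_eq_zero_iff_dvd]
      push_cast
      rw [ZMod.natCast_val, ZMod.cast_id, hb]
      ring
    | succ f hf ih =>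
      obtain ⟨z, hz, hzf⟩ := ih
      obtain ⟨m, hm⟩ := hzf
      have h2z : ((2 * z : ℤ) : ZMod p) ≠ 0 := by
        rw [Ne, ZMod.intCast_zmod_eq_zero_iff_dvd]
        intro h
        rcases (Int.Prime.dvd_mul' (by exact_mod_cast hp) h) with h | h
        · have h2 : p ∣ 2 := Int.ofNat_dvd_right.mp h
          exact hodd ((Nat.prime_dvd_prime_iff_eq hp Nat.prime_two).mp h2)
        · exact hz h
      set c : ℤ := (((- (m : ZMod p) * ((2 * z : ℤ) : ZMod p)⁻¹ : ZMod p)).val : ℤ) with hcdef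
      have hcc : (c : ZMod p) = - (m : ZMod p) * ((2 * z : ℤ) : ZMod p)⁻¹ :=
        intCast_val_dvd_iff _
      have hc : (p:ℤ) ∣ m + 2*z*c := by
        rw [← ZMod.intCast_zmod_eq_zero_iff_dvd]
        push_cast
        rw [hcc]
        have h1 : ((2:ZMod p) * (z:ZMod p)) * ((2 * z : ℤ) : ZMod p)⁻¹ = 1 := by
          have he : ((2 * z : ℤ) : ZMod p) = (2:ZMod p) * (z:ZMod p) := by push_cast; ring
          rw [← he]; exact mul_inv_cancel₀ h2z
        calc (m:ZMod p) + 2 * (z:ZMod p) * (-(m:ZMod p) * ((2 * z : ℤ) : ZMod p)⁻¹)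
            = (m:ZMod p) - ((2:ZMod p) * (z:ZMod p) * ((2 * z : ℤ) : ZMod p)⁻¹) * m := by ring
          _ = 0 := by rw [h1]; ring
      obtain ⟨d, hd⟩ := hc
      refine ⟨z + c * p^f, ?_, ?_⟩
      · intro h
        apply hz
        have hpf : (p:ℤ) ∣ c * p^f := Dvd.dvd.mul_left (dvd_pow_self _ (by omega)) c
        have := dvd_sub h hpf
        simpa using this
      · have key : (z + c * p^f)^2 - a
            = (p:ℤ)^f * (m + 2*z*c) + c^2 * ((p:ℤ)^f)^2 := by
          have h' : z^2 - a = (p:ℤ)^f * m := hm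
          nlinarith [h']
        rw [key, hd]
        have h1 : (p:ℤ)^(f+1) ∣ (p:ℤ)^f * ((p:ℤ) * d) := ⟨d, by ring⟩
        have h2 : (p:ℤ)^(f+1) ∣ c^2 * ((p:ℤ)^f)^2 := by
          refine Dvd.dvd.mul_left ?_ (c^2)
          rw [← pow_mul]
          exact pow_dvd_pow _ (by omega)
        exact dvd_add h1 h2
  rcases Nat.eq_zero_or_pos f with rfl | hf
  · obtain ⟨z, hz, _⟩ := main 1 le_rfl
    exact ⟨z, hz, by simp⟩
  · exact main f hf

/-- In ZMod p (p prime), product square status. -/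
lemma sq_mul_status {p : ℕ} (hp : p.Prime) {a b : ZMod p} (ha : a ≠ 0) (hb : b ≠ 0) :
    IsSquare (a * b) ↔ (IsSquare a ↔ IsSquare b) := by
  haveI : Fact p.Prime := ⟨hp⟩
  have hab : a * b ≠ 0 := mul_ne_zero ha hb
  have hm : quadraticChar (ZMod p) (a*b) = quadraticChar (ZMod p) a * quadraticChar (ZMod p) b :=
    map_mul _ a b
  have d1 := quadraticChar_dichotomy ha
  have d2 := quadraticChar_dichotomy hb
  have e1 := quadraticChar_one_iff_isSquare ha
  have e2 := quadraticChar_one_iff_isSquare hb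
  have e3 := quadraticChar_one_iff_isSquare hab
  constructor
  · intro h
    have h3 : quadraticChar (ZMod p) a * quadraticChar (ZMod p) b = 1 := by
      rw [← hm]; exact e3.mpr h
    rcases d1 with h1 | h1 <;> rcases d2 with h2 | h2
    · exact Iff.intro (fun _ => e2.mp h2) (fun _ => e1.mp h1)
    · rw [h1, h2] at h3; norm_num at h3
    · rw [h1, h2] at h3; norm_num at h3
    · constructor <;> intro hs
      · exact absurd (e1.mpr hs) (by rw [h1]; norm_num)
      · exact absurd (e2.mpr hs) (by rw [h2]; norm_num)
  · intro h
    apply e3.mp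
    rw [hm]
    rcases d1 with h1 | h1 <;> rcases d2 with h2 | h2
    · rw [h1, h2]; norm_num
    · exact absurd (e2.mpr (h.mp (e1.mp h1))) (by rw [h2]; norm_num)
    · exact absurd (e1.mpr (h.mpr (e2.mp h2))) (by rw [h1]; norm_num)
    · rw [h1, h2]; norm_num


lemma prime_not_dvd_mul {p : ℕ} (hp : p.Prime) {a b : ℤ} (ha : ¬(p:ℤ) ∣ a)
    (hb : ¬(p:ℤ) ∣ b) : ¬(p:ℤ) ∣ a * b := fun h =>
  (Int.Prime.dvd_mul' (by exact_mod_cast hp) h).elim ha hb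

lemma sq_expand (p : ℕ) (k : ℕ) (w : ℤ) : ((p:ℤ)^k * w)^2 = (p:ℤ)^(2*k) * w^2 := by
  rw [mul_pow, ← pow_mul]; ring_nf

/-- the two-element construction -/
lemma pairZero {p : ℕ} (hp : p.Prime) (hodd : p ≠ 2) {e : ℕ}
    {vi vj : ℕ} {ui uj yi yj : ℤ}
    (hyi : yi = (p:ℤ)^vi * ui) (hyj : yj = (p:ℤ)^vj * uj)
    (hui : ¬(p:ℤ) ∣ ui) (huj : ¬(p:ℤ) ∣ uj)
    (hvi : vi < e) (hvj : vj < e) (hpar : vi % 2 = vj % 2)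
    (hQR : IsSquare (((-(ui*uj) : ℤ)) : ZMod p)) :
    ∃ ti tj : ℤ, ¬((p:ℤ)^e ∣ ti^2) ∧ ¬((p:ℤ)^e ∣ tj^2) ∧
      (p:ℤ)^e ∣ ti^2 * yi + tj^2 * yj := by
  have hnd : ¬ (p:ℤ) ∣ -(ui*uj) := fun h => prime_not_dvd_mul hp hui huj (dvd_neg.mp h)
  obtain ⟨z, hz, hze⟩ := henselSq hp hodd hnd hQR e
  set V := max vi vj with hV
  obtain ⟨ki, hki⟩ : ∃ k, 2*k = V - vi := ⟨(V - vi)/2, by omega⟩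
  obtain ⟨kj, hkj⟩ : ∃ k, 2*k = V - vj := ⟨(V - vj)/2, by omega⟩
  refine ⟨(p:ℤ)^ki * uj, (p:ℤ)^kj * z, ?_, ?_, ?_⟩
  · rw [sq_expand]; exact notDvdPowMulSq hp (by omega) huj
  · rw [sq_expand]; exact notDvdPowMulSq hp (by omega) hz
  · have hv1 : (p:ℤ)^(2*ki) * (p:ℤ)^vi = (p:ℤ)^V := by rw [← pow_add]; congr 1; omega
    have hv2 : (p:ℤ)^(2*kj) * (p:ℤ)^vj = (p:ℤ)^V := by rw [← pow_add]; congr 1; omega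
    have key : ((p:ℤ)^ki * uj)^2 * yi + ((p:ℤ)^kj * z)^2 * yj
        = (p:ℤ)^V * uj * (z^2 - (-(ui*uj))) := by
      rw [sq_expand, sq_expand, hyi, hyj]
      calc (p:ℤ)^(2*ki) * uj^2 * ((p:ℤ)^vi * ui) + (p:ℤ)^(2*kj) * z^2 * ((p:ℤ)^vj * uj)
          = ((p:ℤ)^(2*ki) * (p:ℤ)^vi) * (uj^2 * ui) + ((p:ℤ)^(2*kj) * (p:ℤ)^vj) * (z^2 * uj) := by
            ring
        _ = (p:ℤ)^V * (uj^2 * ui) + (p:ℤ)^V * (z^2 * uj) := by rw [hv1, hv2]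
        _ = (p:ℤ)^V * uj * (z^2 - (-(ui*uj))) := by ring
    rw [key]
    exact Dvd.dvd.mul_left hze _

/-- the three-element construction (case -1 nonsquare) -/
lemma tripleZero {p : ℕ} (hp : p.Prime) (hodd : p ≠ 2) {e : ℕ}
    {v1 v2 v3 : ℕ} {u1 u2 u3 y1 y2 y3 : ℤ}
    (hy1 : y1 = (p:ℤ)^v1 * u1) (hy2 : y2 = (p:ℤ)^v2 * u2) (hy3 : y3 = (p:ℤ)^v3 * u3)
    (hu1 : ¬(p:ℤ) ∣ u1) (hu2 : ¬(p:ℤ) ∣ u2) (hu3 : ¬(p:ℤ) ∣ u3)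
    (hv1 : v1 < e) (hv2 : v2 < e) (hv3 : v3 < e)
    (hp12 : v1 % 2 = v2 % 2) (hp13 : v1 % 2 = v3 % 2)
    (hQ12 : IsSquare (((u1*u2 : ℤ)) : ZMod p)) (hQ13 : IsSquare (((u1*u3 : ℤ)) : ZMod p))
    (hQ23 : IsSquare (((u2*u3 : ℤ)) : ZMod p))
    (hneg : ¬ IsSquare (-1 : ZMod p)) :
    ∃ t1 t2 t3 : ℤ, ¬((p:ℤ)^e ∣ t1^2) ∧ ¬((p:ℤ)^e ∣ t2^2) ∧ ¬((p:ℤ)^e ∣ t3^2) ∧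
      (p:ℤ)^e ∣ t1^2 * y1 + t2^2 * y2 + t3^2 * y3 := by
  haveI : Fact p.Prime := ⟨hp⟩
  obtain ⟨A, B, hAB⟩ := ZMod.sq_add_sq p (-1 : ZMod p)
  have hA : A ≠ 0 := by
    rintro rfl
    exact hneg ⟨B, by rw [← hAB]; ring⟩
  have hB : B ≠ 0 := by
    rintro rfl
    exact hneg ⟨A, by rw [← hAB]; ring⟩
  set s0 : ℤ := (B.val : ℤ) with hs0def
  have hs0cast : ((s0 : ℤ) : ZMod p) = B := by
    push_cast [hs0def]
    rw [ZMod.natCast_val, ZMod.cast_id]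
  have hs0 : ¬ (p:ℤ) ∣ s0 := by
    rw [← ZMod.intCast_zmod_eq_zero_iff_dvd, hs0cast]; exact hB
  set c : ℤ := 1 + s0^2 with hcdef
  have hccast : ((c : ℤ) : ZMod p) = - A^2 := by
    push_cast [hcdef]
    rw [hs0cast]
    linear_combination hAB
  have hc : ¬ (p:ℤ) ∣ c := by
    rw [← ZMod.intCast_zmod_eq_zero_iff_dvd, hccast]
    simpa using pow_ne_zero 2 hA
  have hsqc : IsSquare ((-c : ℤ) : ZMod p) := by
    refine ⟨A, ?_⟩
    push_cast
    rw [hccast]; ring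
  obtain ⟨R, hR, hRe⟩ := henselSq hp hodd (fun h => hc (dvd_neg.mp h)) hsqc e
  have h23 : ¬ (p:ℤ) ∣ u2*u3 := prime_not_dvd_mul hp hu2 hu3
  have h13 : ¬ (p:ℤ) ∣ u1*u3 := prime_not_dvd_mul hp hu1 hu3
  have h12 : ¬ (p:ℤ) ∣ u1*u2 := prime_not_dvd_mul hp hu1 hu2
  obtain ⟨qA, hqA, hqAe⟩ := henselSq hp hodd h23 hQ23 e
  obtain ⟨qB, hqB, hqBe⟩ := henselSq hp hodd h13 hQ13 e
  obtain ⟨qC, hqC, hqCe⟩ := henselSq hp hodd h12 hQ12 e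
  set V := max v1 (max v2 v3) with hV
  obtain ⟨k1, hk1⟩ : ∃ k, 2*k = V - v1 := ⟨(V - v1)/2, by omega⟩
  obtain ⟨k2, hk2⟩ : ∃ k, 2*k = V - v2 := ⟨(V - v2)/2, by omega⟩
  obtain ⟨k3, hk3⟩ : ∃ k, 2*k = V - v3 := ⟨(V - v3)/2, by omega⟩
  refine ⟨(p:ℤ)^k1 * qA, (p:ℤ)^k2 * (qB * s0), (p:ℤ)^k3 * (qC * R), ?_, ?_, ?_, ?_⟩
  · rw [sq_expand]; exact notDvdPowMulSq hp (by omega) hqA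
  · rw [sq_expand]; exact notDvdPowMulSq hp (by omega) (prime_not_dvd_mul hp hqB hs0)
  · rw [sq_expand]; exact notDvdPowMulSq hp (by omega) (prime_not_dvd_mul hp hqC hR)
  · have hw1 : (p:ℤ)^(2*k1) * (p:ℤ)^v1 = (p:ℤ)^V := by rw [← pow_add]; congr 1; omega
    have hw2 : (p:ℤ)^(2*k2) * (p:ℤ)^v2 = (p:ℤ)^V := by rw [← pow_add]; congr 1; omega
    have hw3 : (p:ℤ)^(2*k3) * (p:ℤ)^v3 = (p:ℤ)^V := by rw [← pow_add]; congr 1; omega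
    set Br : ℤ := qA^2*u1 + qB^2*s0^2*u2 + qC^2*R^2*u3 with hBr
    have key : ((p:ℤ)^k1 * qA)^2 * y1 + ((p:ℤ)^k2 * (qB*s0))^2 * y2
        + ((p:ℤ)^k3 * (qC*R))^2 * y3 = (p:ℤ)^V * Br := by
      rw [sq_expand, sq_expand, sq_expand, hy1, hy2, hy3, hBr]
      calc (p:ℤ)^(2*k1) * qA^2 * ((p:ℤ)^v1 * u1) + (p:ℤ)^(2*k2) * (qB*s0)^2 * ((p:ℤ)^v2 * u2)
            + (p:ℤ)^(2*k3) * (qC*R)^2 * ((p:ℤ)^v3 * u3)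
          = ((p:ℤ)^(2*k1) * (p:ℤ)^v1) * (qA^2*u1) + ((p:ℤ)^(2*k2) * (p:ℤ)^v2) * (qB^2*s0^2*u2)
            + ((p:ℤ)^(2*k3) * (p:ℤ)^v3) * (qC^2*R^2*u3) := by ring
        _ = (p:ℤ)^V * (qA^2*u1) + (p:ℤ)^V * (qB^2*s0^2*u2) + (p:ℤ)^V * (qC^2*R^2*u3) := by
            rw [hw1, hw2, hw3]
        _ = (p:ℤ)^V * (qA^2*u1 + qB^2*s0^2*u2 + qC^2*R^2*u3) := by ring
    rw [key]
    have hdecomp : Br = (qA^2 - u2*u3)*u1 + (qB^2 - u1*u3)*(s0^2*u2)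
        + (qC^2 - u1*u2)*(R^2*u3) + (u1*u2*u3)*(R^2 - (-c)) := by
      rw [hBr, hcdef]; ring
    have hdvd : (p:ℤ)^e ∣ Br := by
      rw [hdecomp]
      exact dvd_add (dvd_add (dvd_add (hqAe.mul_right _) (hqBe.mul_right _))
        (hqCe.mul_right _)) (hRe.mul_left _)
    exact hdvd.mul_left _


lemma three_distinct {α : Type*} [DecidableEq α] {s : Finset α} (h : 2 < s.card) :
    ∃ a b c, a ∈ s ∧ b ∈ s ∧ c ∈ s ∧ a ≠ b ∧ a ≠ c ∧ b ≠ c := by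
  have hs0 : s.Nonempty := Finset.card_pos.mp (by omega)
  obtain ⟨a, ha⟩ := hs0
  have h2 : 1 < (s.erase a).card := by
    rw [Finset.card_erase_of_mem ha]; omega
  have hs1 : (s.erase a).Nonempty := Finset.card_pos.mp (by omega)
  obtain ⟨b, hb⟩ := hs1
  have hb' : b ∈ s.erase a := hb
  have h3 : 0 < ((s.erase a).erase b).card := by
    have := Finset.card_erase_of_mem hb'; omega
  have hs2 : ((s.erase a).erase b).Nonempty := Finset.card_pos.mp h3
  obtain ⟨c, hc⟩ := hs2
  refine ⟨a, b, c, ha, (Finset.mem_erase.mp hb').2, ?_, ?_, ?_, ?_⟩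
  · exact (Finset.mem_erase.mp ((Finset.mem_erase.mp hc).2)).2
  · exact fun h => (Finset.mem_erase.mp hb').1 h.symm
  · exact fun h => (Finset.mem_erase.mp ((Finset.mem_erase.mp hc).2)).1 h.symm
  · exact fun h => (Finset.mem_erase.mp hc).1 h.symm

/-- Core prime-power lemma: every 5 integers have a subset with square weights,
    nonzero mod p^e, with weighted sum divisible by p^e. -/
lemma coreSQZ {p : ℕ} (hp : p.Prime) (hodd : p ≠ 2) {e : ℕ} (he : 1 ≤ e)
    (y : Fin 5 → ℤ) :
    ∃ (J : Finset (Fin 5)) (t : Fin 5 → ℤ), J.Nonempty ∧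
      (∀ i ∈ J, ¬ ((p:ℤ)^e ∣ t i ^ 2)) ∧ (p:ℤ)^e ∣ ∑ i ∈ J, t i ^2 * y i := by
  classical
  haveI : Fact p.Prime := ⟨hp⟩
  have hpe1 : ¬ ((p:ℤ)^e ∣ (1:ℤ)) := by
    intro h
    have h1 := Int.le_of_dvd one_pos h
    have h2 : (2:ℤ) ≤ (p:ℤ)^e :=
      le_trans (by exact_mod_cast hp.two_le) (le_self_pow₀ (by exact_mod_cast hp.one_lt.le) (by omega))
    omega
  by_cases hz : ∃ i, (p:ℤ)^e ∣ y i
  · obtain ⟨i, hi⟩ := hz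
    exact ⟨{i}, fun _ => 1, Finset.singleton_nonempty i,
      by simpa using hpe1, by simpa using hi⟩
  push_neg at hz
  choose v u hvlt hyvu hu using fun i => valDecompLt hp (hz i)
  have hucast : ∀ i, ((u i : ℤ) : ZMod p) ≠ 0 := fun i => by
    rw [Ne, ZMod.intCast_zmod_eq_zero_iff_dvd]; exact hu i
  -- helper to build the pair answer
  have buildPair : ∀ i j : Fin 5, i ≠ j → v i % 2 = v j % 2 →
      IsSquare (((-(u i * u j) : ℤ)) : ZMod p) →
      ∃ (J : Finset (Fin 5)) (t : Fin 5 → ℤ), J.Nonempty ∧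
        (∀ k ∈ J, ¬ ((p:ℤ)^e ∣ t k ^ 2)) ∧ (p:ℤ)^e ∣ ∑ k ∈ J, t k ^2 * y k := by
    intro i j hij hpar hQR
    obtain ⟨ti, tj, h1, h2, h3⟩ := pairZero hp hodd (hyvu i) (hyvu j) (hu i) (hu j)
      (hvlt i) (hvlt j) hpar hQR
    refine ⟨{i, j}, fun k => if k = i then ti else tj, ⟨i, by simp⟩, ?_, ?_⟩
    · intro k hk
      rcases Finset.mem_insert.mp hk with rfl | hk
      · simpa using h1
      · rw [Finset.mem_singleton] at hk
        subst hk
        simp only [if_neg hij.symm]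
        exact h2
    · rw [Finset.sum_pair hij]
      simpa [if_neg hij.symm] using h3
  by_cases hneg : IsSquare (-1 : ZMod p)
  · -- pigeonhole on 4 classes
    have hcard : Fintype.card (Bool × Bool) < Fintype.card (Fin 5) := by simp
    obtain ⟨i, j, hij, hcl⟩ := Fintype.exists_ne_map_eq_of_card_lt
      (fun i => (decide (v i % 2 = 0), decide (IsSquare ((u i : ℤ) : ZMod p)))) hcard
    have hpar : v i % 2 = v j % 2 := by
      have := congrArg Prod.fst hcl
      simp only [decide_eq_decide] at this
      omega
    have hst : IsSquare ((u i : ℤ) : ZMod p) ↔ IsSquare ((u j : ℤ) : ZMod p) := by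
      have := congrArg Prod.snd hcl
      simpa only [decide_eq_decide] using this
    refine buildPair i j hij hpar ?_
    have hprod : IsSquare (((u i : ℤ) : ZMod p) * ((u j : ℤ) : ZMod p)) :=
      (sq_mul_status hp (hucast i) (hucast j)).mpr hst
    have : IsSquare ((-1 : ZMod p) * (((u i : ℤ) : ZMod p) * ((u j : ℤ) : ZMod p))) :=
      (sq_mul_status hp (by simp) (mul_ne_zero (hucast i) (hucast j))).mpr
        (iff_of_true hneg hprod)
    convert this using 1
    push_cast
    ring
  · by_cases hpair : ∃ i j, i ≠ j ∧ v i % 2 = v j % 2 ∧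
        ¬ (IsSquare ((u i : ℤ) : ZMod p) ↔ IsSquare ((u j : ℤ) : ZMod p))
    · obtain ⟨i, j, hij, hpar, hst⟩ := hpair
      refine buildPair i j hij hpar ?_
      have hprod : ¬ IsSquare (((u i : ℤ) : ZMod p) * ((u j : ℤ) : ZMod p)) := fun h =>
        hst ((sq_mul_status hp (hucast i) (hucast j)).mp h)
      have : IsSquare ((-1 : ZMod p) * (((u i : ℤ) : ZMod p) * ((u j : ℤ) : ZMod p))) :=
        (sq_mul_status hp (by simp) (mul_ne_zero (hucast i) (hucast j))).mpr
          (iff_of_false hneg hprod)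
      convert this using 1
      push_cast
      ring
    · push_neg at hpair
      -- three elements with same parity
      have hcard : Fintype.card Bool * 2 < Fintype.card (Fin 5) := by simp
      obtain ⟨bo, hbo⟩ := Fintype.exists_lt_card_fiber_of_mul_lt_card
        (fun i => decide (v i % 2 = 0)) hcard
      obtain ⟨a, b, c, ha, hb, hc, hab, hac, hbc⟩ := three_distinct hbo
      have hpa : ∀ x ∈ Finset.filter (fun i => decide (v i % 2 = 0) = bo) Finset.univ,
          ∀ z ∈ Finset.filter (fun i => decide (v i % 2 = 0) = bo) Finset.univ,
          v x % 2 = v z % 2 := by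
        intro x hx z hz
        have hx' := (Finset.mem_filter.mp hx).2
        have hz' := (Finset.mem_filter.mp hz).2
        rw [← hz'] at hx'
        simp only [decide_eq_decide] at hx'
        omega
      have hab2 := hpa a ha b hb
      have hac2 := hpa a ha c hc
      have hbc2 := hpa b hb c hc
      have hstat : ∀ x z : Fin 5, x ≠ z → v x % 2 = v z % 2 →
          IsSquare (((u x * u z : ℤ)) : ZMod p) := by
        intro x z hxz hpar
        have h0 := hpair x z hxz hpar
        have : IsSquare (((u x : ℤ) : ZMod p) * ((u z : ℤ) : ZMod p)) :=
          (sq_mul_status hp (hucast x) (hucast z)).mpr h0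
        convert this using 1
        push_cast
        ring
      obtain ⟨t1, t2, t3, h1, h2, h3, hdvd⟩ := tripleZero hp hodd
        (hyvu a) (hyvu b) (hyvu c) (hu a) (hu b) (hu c) (hvlt a) (hvlt b) (hvlt c)
        hab2 hac2 (hstat a b hab hab2) (hstat a c hac hac2) (hstat b c hbc hbc2) hneg
      refine ⟨{a, b, c}, fun k => if k = a then t1 else if k = b then t2 else t3,
        ⟨a, by simp⟩, ?_, ?_⟩
      · intro k hk
        simp only [Finset.mem_insert, Finset.mem_singleton] at hk
        rcases hk with rfl | rfl | rfl
        · simpa using h1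
        · simpa [if_neg hab.symm] using h2
        · simpa [if_neg hac.symm, if_neg hbc.symm] using h3
      · have hsum : ∑ k ∈ ({a, b, c} : Finset (Fin 5)),
            (if k = a then t1 else if k = b then t2 else t3)^2 * y k
            = t1^2 * y a + t2^2 * y b + t3^2 * y c := by
          rw [Finset.sum_insert (by simp [hab, hac]), Finset.sum_pair hbc]
          simp [if_neg hab.symm, if_neg hac.symm, if_neg hbc.symm]
          ring
        rw [hsum]
        exact hdvd


theorem upperBound (n : ℕ) (hn : 1 < n) (hodd : Odd n) :
    DConst n (nonzeroSquares n) 5 := by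
  haveI : NeZero n := ⟨by omega⟩
  refine ⟨by norm_num, fun x => ?_⟩
  set p := n.minFac with hpdef
  have hp : p.Prime := Nat.minFac_prime (by omega)
  have hpdvd : p ∣ n := Nat.minFac_dvd n
  have hp2 : p ≠ 2 := by
    intro h2
    rw [h2] at hpdvd
    rcases hodd with ⟨k, hk⟩
    obtain ⟨c, hc⟩ := hpdvd
    omega
  set e := n.factorization p with hedef
  have he : 1 ≤ e := hp.factorization_pos_of_dvd (by omega) hpdvd
  set q := p ^ e with hqdef
  set m := n / q with hmdef
  have hqm : q * m = n := Nat.ordProj_mul_ordCompl_eq_self n p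
  have hco : Nat.Coprime q m := Nat.Coprime.pow_left _ (Nat.coprime_ordCompl hp (by omega))
  set X : Fin 5 → ℤ := fun i => ((x i).val : ℤ) with hXdef
  have hXcast : ∀ i, ((X i : ℤ) : ZMod n) = x i := fun i => by
    rw [hXdef]
    push_cast
    rw [ZMod.natCast_val, ZMod.cast_id]
  obtain ⟨J, t, hJ, hnd, hdvd⟩ := coreSQZ hp hp2 he X
  choose T hT1 hT2 using fun i => crt2 hco (t i) (0:ℤ)
  simp only [sub_zero] at hT2
  have hqZ : ((q:ℕ):ℤ) = (p:ℤ)^e := by push_cast [hqdef]; ring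
  have hsqdvd : ∀ i, (q:ℤ) ∣ (T i)^2 - (t i)^2 := fun i => by
    have : (T i)^2 - (t i)^2 = (T i - t i) * (T i + t i) := by ring
    rw [this]
    exact (hT1 i).mul_right _
  refine ⟨J, hJ, fun i => ((T i ^ 2 : ℤ) : ZMod n), fun i hi => ⟨?_, ⟨((T i : ℤ) : ZMod n), by push_cast; ring⟩⟩, ?_⟩
  · -- nonzero
    intro h0
    rw [ZMod.intCast_zmod_eq_zero_iff_dvd] at h0
    have hqn : ((q:ℕ):ℤ) ∣ (n:ℤ) := by exact_mod_cast Int.natCast_dvd_natCast.mpr ⟨m, hqm.symm⟩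
    have h1 : ((q:ℕ):ℤ) ∣ (T i)^2 := dvd_trans hqn h0
    have h2 : ((q:ℕ):ℤ) ∣ (t i)^2 := by
      have := dvd_sub h1 (hsqdvd i)
      simpa using this
    rw [hqZ] at h2
    exact hnd i hi h2
  · -- sum is zero
    have hsum : ∑ i ∈ J, (((T i ^ 2 : ℤ) : ZMod n)) * x i
        = (((∑ i ∈ J, T i ^2 * X i : ℤ)) : ZMod n) := by
      push_cast
      refine Finset.sum_congr rfl fun i _ => ?_
      rw [hXcast i]
    rw [hsum, ZMod.intCast_zmod_eq_zero_iff_dvd]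
    have hq : ((q:ℕ):ℤ) ∣ ∑ i ∈ J, T i ^2 * X i := by
      have hdiff : ((q:ℕ):ℤ) ∣ ∑ i ∈ J, T i ^2 * X i - ∑ i ∈ J, t i ^2 * X i := by
        rw [← Finset.sum_sub_distrib]
        refine Finset.dvd_sum fun i _ => ?_
        have : T i ^2 * X i - t i ^2 * X i = ((T i)^2 - (t i)^2) * X i := by ring
        rw [this]
        exact (hsqdvd i).mul_right _
      have := dvd_add hdiff (hqZ ▸ hdvd)
      simpa using this
    have hm : ((m:ℕ):ℤ) ∣ ∑ i ∈ J, T i ^2 * X i := by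
      refine Finset.dvd_sum fun i _ => ?_
      refine Dvd.dvd.mul_right (dvd_trans (hT2 i) ?_) _
      exact ⟨T i, by ring⟩
    have hcoZ : IsCoprime ((q:ℕ):ℤ) ((m:ℕ):ℤ) := Nat.isCoprime_iff_coprime.mpr hco
    have := hcoZ.mul_dvd hq hm
    have hqmZ : ((q:ℕ):ℤ) * ((m:ℕ):ℤ) = ((n:ℕ):ℤ) := by exact_mod_cast hqm
    rw [hqmZ] at this
    exact this


lemma hd0_aux {p : ℕ} (hp : p.Prime) {d : ℤ} (hd : ¬(p:ℤ) ∣ d) (h : (p:ℤ) ∣ d^2) :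
    False := hd (Int.Prime.dvd_pow' (by exact_mod_cast hp) h)

lemma nsq_of_dvd {p : ℕ} (hp : p.Prime) {N d0 d1 : ℤ}
    (hd0 : ¬(p:ℤ) ∣ d0) (hd1 : ¬(p:ℤ) ∣ d1)
    (h : (p:ℤ) ∣ d0^2 - N * d1^2) : IsSquare ((N : ℤ) : ZMod p) := by
  haveI : Fact p.Prime := ⟨hp⟩
  have hz : ((d0^2 - N * d1^2 : ℤ) : ZMod p) = 0 := by
    rwa [ZMod.intCast_zmod_eq_zero_iff_dvd]
  push_cast at hz
  have h1 : ((d1 : ℤ) : ZMod p) ≠ 0 := by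
    rw [Ne, ZMod.intCast_zmod_eq_zero_iff_dvd]; exact hd1
  refine ⟨((d0:ℤ):ZMod p) * ((d1:ℤ):ZMod p)⁻¹, ?_⟩
  have hNeq : ((N:ℤ):ZMod p) * ((d1:ℤ):ZMod p)^2 = ((d0:ℤ):ZMod p)^2 := by
    linear_combination -hz
  field_simp
  linear_combination hNeq

/-- shape of a two-term combination with unit parts 1 and -N -/
lemma shapePair {p : ℕ} (hp : p.Prime) {e : ℕ} {N T0 T1 : ℤ}
    (hN : ¬(p:ℤ) ∣ N) (hNsq : ¬ IsSquare ((N : ℤ) : ZMod p))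
    (h0 : T0 = 0 ∨ ∃ (k:ℕ) (d:ℤ), T0 = (p:ℤ)^(2*k) * d^2 ∧ ¬(p:ℤ)∣d ∧ 2*k < e)
    (h1 : T1 = 0 ∨ ∃ (k:ℕ) (d:ℤ), T1 = (p:ℤ)^(2*k) * d^2 * (-N) ∧ ¬(p:ℤ)∣d ∧ 2*k < e) :
    (T0 = 0 ∧ T1 = 0) ∨
      ∃ (a:ℕ) (α:ℤ), T0 + T1 = (p:ℤ)^(2*a) * α ∧ ¬(p:ℤ)∣α ∧ 2*a < e := by
  have hppos : (0:ℤ) < (p:ℤ) := by exact_mod_cast hp.pos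
  rcases h0 with rfl | ⟨k0, d0, he0, hd0, hk0⟩
  · rcases h1 with rfl | ⟨k1, d1, he1, hd1, hk1⟩
    · exact Or.inl ⟨rfl, rfl⟩
    · refine Or.inr ⟨k1, d1^2 * (-N), by rw [he1]; ring, ?_, hk1⟩
      intro h
      rcases (Int.Prime.dvd_mul' (by exact_mod_cast hp) h) with h | h
      · exact hd0_aux hp hd1 h
      · exact hN (dvd_neg.mp h)
  · rcases h1 with rfl | ⟨k1, d1, he1, hd1, hk1⟩
    · refine Or.inr ⟨k0, d0^2, by rw [he0]; ring, fun h => ?_, hk0⟩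
      exact hd0_aux hp hd0 h
    · rcases lt_trichotomy k0 k1 with hlt | heq | hgt
      · refine Or.inr ⟨k0, d0^2 - (p:ℤ)^(2*(k1-k0)) * d1^2 * N, ?_, ?_, hk0⟩
        · rw [he0, he1]
          have : (p:ℤ)^(2*k1) = (p:ℤ)^(2*k0) * (p:ℤ)^(2*(k1-k0)) := by
            rw [← pow_add]; congr 1; omega
          rw [this]; ring
        · intro h
          have hdp : (p:ℤ) ∣ (p:ℤ)^(2*(k1-k0)) * d1^2 * N :=
            (dvd_pow_self (p:ℤ) (by omega)).mul_right _ |>.mul_right _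
          have : (p:ℤ) ∣ d0^2 := by
            have := dvd_add h hdp
            simpa using this
          exact hd0_aux hp hd0 this
      · subst heq
        refine Or.inr ⟨k0, d0^2 - d1^2 * N, by rw [he0, he1]; ring, fun h => ?_, hk0⟩
        exact hNsq (nsq_of_dvd hp hd0 hd1 (by convert h using 1; ring))
      · refine Or.inr ⟨k1, (p:ℤ)^(2*(k0-k1)) * d0^2 - d1^2 * N, ?_, ?_, hk1⟩
        · rw [he0, he1]
          have : (p:ℤ)^(2*k0) = (p:ℤ)^(2*k1) * (p:ℤ)^(2*(k0-k1)) := by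
            rw [← pow_add]; congr 1; omega
          rw [this]; ring
        · intro h
          have hdp : (p:ℤ) ∣ (p:ℤ)^(2*(k0-k1)) * d0^2 :=
            (dvd_pow_self (p:ℤ) (by omega)).mul_right _
          have h2 : (p:ℤ) ∣ d1^2 * N := by
            have := dvd_sub hdp h
            simpa using this
          rcases (Int.Prime.dvd_mul' (by exact_mod_cast hp) h2) with h | h
          · exact hd0_aux hp hd1 h
          · exact hN h

/-- combine even and odd valuation parts -/
lemma lbcombine {p : ℕ} (hp : p.Prime) {e : ℕ} (heven : Even e) {A S : ℤ}
    (hA : A = 0 ∨ ∃ (a:ℕ) (α:ℤ), A = (p:ℤ)^(2*a)*α ∧ ¬(p:ℤ)∣α ∧ 2*a < e)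
    (hS : S = 0 ∨ ∃ (b:ℕ) (β:ℤ), S = (p:ℤ)^(2*b)*β ∧ ¬(p:ℤ)∣β ∧ 2*b < e)
    (hnz : ¬(A = 0 ∧ S = 0))
    (hdvd : (p:ℤ)^e ∣ A + (p:ℤ) * S) : False := by
  obtain ⟨cc, hcc⟩ := heven
  rcases hA with rfl | ⟨a, α, hAe, hα, ha⟩
  · rcases hS with rfl | ⟨b, β, hSe, hβ, hb⟩
    · exact hnz ⟨rfl, rfl⟩
    · rw [hSe, zero_add] at hdvd
      have h1 : (p:ℤ) * ((p:ℤ)^(2*b)*β) = (p:ℤ)^(2*b+1) * β := by ring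
      rw [h1] at hdvd
      exact notDvdPowMul hp (by omega) hβ hdvd
  · rcases hS with rfl | ⟨b, β, hSe, hβ, hb⟩
    · rw [mul_zero, add_zero, hAe] at hdvd
      exact notDvdPowMul hp (by omega) hα hdvd
    · rw [hAe, hSe] at hdvd
      have h1 : (p:ℤ)^(2*a)*α + (p:ℤ) * ((p:ℤ)^(2*b)*β) = (p:ℤ)^(2*a)*α + (p:ℤ)^(2*b+1)*β := by
        ring
      rw [h1] at hdvd
      rcases lt_or_gt_of_ne (show 2*a ≠ 2*b+1 by omega) with hlt | hgt
      · -- 2a < 2b+1 : p^(2a+1) divides sum and second term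
        have h2 : (p:ℤ)^(2*a+1) ∣ (p:ℤ)^(2*a)*α + (p:ℤ)^(2*b+1)*β :=
          dvd_trans (pow_dvd_pow _ (by omega)) hdvd
        have h3 : (p:ℤ)^(2*a+1) ∣ (p:ℤ)^(2*b+1)*β :=
          ((pow_dvd_pow (p:ℤ) (by omega)).mul_right _)
        have h4 : (p:ℤ)^(2*a+1) ∣ (p:ℤ)^(2*a)*α := by
          have := dvd_sub h2 h3
          simpa using this
        exact notDvdPowMul hp (by omega) hα h4
      · have hb2 : 2*b+2 ≤ e := by omega
        have h2 : (p:ℤ)^(2*b+2) ∣ (p:ℤ)^(2*a)*α + (p:ℤ)^(2*b+1)*β :=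
          dvd_trans (pow_dvd_pow _ hb2) hdvd
        have h3 : (p:ℤ)^(2*b+2) ∣ (p:ℤ)^(2*a)*α :=
          ((pow_dvd_pow (p:ℤ) (by omega)).mul_right _)
        have h4 : (p:ℤ)^(2*b+2) ∣ (p:ℤ)^(2*b+1)*β := by
          have := dvd_sub h2 h3
          simpa using this
        exact notDvdPowMul hp (by omega) hβ h4

/-- the full 4-term contradiction -/
lemma lbcore {p : ℕ} (hp : p.Prime) {e : ℕ} (heven : Even e) {N : ℤ}
    (hN : ¬(p:ℤ) ∣ N) (hNsq : ¬ IsSquare ((N : ℤ) : ZMod p))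
    {T0 T1 U2 U3 : ℤ}
    (h0 : T0 = 0 ∨ ∃ (k:ℕ) (d:ℤ), T0 = (p:ℤ)^(2*k) * d^2 ∧ ¬(p:ℤ)∣d ∧ 2*k < e)
    (h1 : T1 = 0 ∨ ∃ (k:ℕ) (d:ℤ), T1 = (p:ℤ)^(2*k) * d^2 * (-N) ∧ ¬(p:ℤ)∣d ∧ 2*k < e)
    (h2 : U2 = 0 ∨ ∃ (k:ℕ) (d:ℤ), U2 = (p:ℤ)^(2*k) * d^2 ∧ ¬(p:ℤ)∣d ∧ 2*k < e)
    (h3 : U3 = 0 ∨ ∃ (k:ℕ) (d:ℤ), U3 = (p:ℤ)^(2*k) * d^2 * (-N) ∧ ¬(p:ℤ)∣d ∧ 2*k < e)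
    (hne : ¬(T0 = 0 ∧ T1 = 0 ∧ U2 = 0 ∧ U3 = 0))
    (hdvd : (p:ℤ)^e ∣ T0 + T1 + (p:ℤ)*U2 + (p:ℤ)*U3) : False := by
  have hA := shapePair hp hN hNsq h0 h1
  have hS := shapePair hp hN hNsq h2 h3
  have hd2 : (p:ℤ)^e ∣ (T0 + T1) + (p:ℤ) * (U2 + U3) := by
    convert hdvd using 1; ring
  rcases hA with ⟨hz0, hz1⟩ | ⟨a, α, hAe, hα, ha⟩
  · rcases hS with ⟨hz2, hz3⟩ | ⟨b, β, hSe, hβ, hb⟩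
    · exact hne ⟨hz0, hz1, hz2, hz3⟩
    · refine lbcombine hp heven (Or.inl (by rw [hz0, hz1]; ring))
        (Or.inr ⟨b, β, hSe, hβ, hb⟩) ?_ hd2
      rintro ⟨-, hS0⟩
      rw [hS0] at hSe
      have : (p:ℤ)^(2*b) * β ≠ 0 := by
        apply mul_ne_zero (pow_ne_zero _ (by exact_mod_cast hp.ne_zero))
        rintro rfl
        exact hβ (dvd_zero _)
      exact this hSe.symm
  · have hAne : T0 + T1 ≠ 0 := by
      rw [hAe]
      apply mul_ne_zero (pow_ne_zero _ (by exact_mod_cast hp.ne_zero))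
      rintro rfl
      exact hα (dvd_zero _)
    refine lbcombine hp heven (Or.inr ⟨a, α, hAe, hα, ha⟩) ?_ (fun h => hAne h.1) hd2
    rcases hS with ⟨hz2, hz3⟩ | ⟨b, β, hSe, hβ, hb⟩
    · exact Or.inl (by rw [hz2, hz3]; ring)
    · exact Or.inr ⟨b, β, hSe, hβ, hb⟩


/-- if all prime power components divide, so does n -/
lemma primePowDvdAll {n : ℕ} (hn : n ≠ 0) {W : ℤ}
    (h : ∀ p ∈ n.primeFactors, ((p:ℤ)^(n.factorization p)) ∣ W) : (n:ℤ) ∣ W := by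
  have hprod : ∏ p ∈ n.primeFactors, (p:ℤ)^(n.factorization p) = (n:ℤ) := by
    have h1 := Nat.factorization_prod_pow_eq_self hn
    have h2 : (n.factorization.prod fun p k => p ^ k)
        = ∏ p ∈ n.primeFactors, p ^ (n.factorization p) := by
      rw [Finsupp.prod]
      exact Finset.prod_congr (by rw [Nat.support_factorization]) (fun _ _ => rfl)
    have h3 : ∏ p ∈ n.primeFactors, p ^ (n.factorization p) = n := by
      rw [← h2]; exact h1
    exact_mod_cast h3
  rw [← hprod]
  refine Finset.prod_dvd_of_coprime ?_ (fun p hp => h p hp)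
  intro a ha b hb hab
  simp only [Function.onFun]
  have hpa := Nat.prime_of_mem_primeFactors ha
  have hpb := Nat.prime_of_mem_primeFactors hb
  have : Nat.Coprime (a^(n.factorization a)) (b^(n.factorization b)) :=
    Nat.Coprime.pow _ _ ((Nat.coprime_primes hpa hpb).mpr hab)
  exact_mod_cast Nat.isCoprime_iff_coprime.mpr this

lemma existsComponent {n : ℕ} (hn : 1 < n) {w : ZMod n} (hw : w ≠ 0) :
    ∃ p ∈ n.primeFactors, ¬ ((p:ℤ)^(n.factorization p) ∣ ((w.val : ℤ))) := by
  haveI : NeZero n := ⟨by omega⟩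
  by_contra hall
  push_neg at hall
  have : (n:ℤ) ∣ (w.val : ℤ) := primePowDvdAll (by omega) hall
  have hnat : n ∣ w.val := by exact_mod_cast this
  have : w.val = 0 := Nat.eq_zero_of_dvd_of_lt hnat (ZMod.val_lt w)
  exact hw (by rwa [← ZMod.val_eq_zero])

lemma lowerBoundSeq (n : ℕ) (hn : 1 < n) (hodd : Odd n) (hsq : IsSquare n) :
    ∃ x : Fin 4 → ZMod n, ¬ HasWZSSubseq (nonzeroSquares n) x := by
  classical
  haveI : NeZero n := ⟨by omega⟩
  set S := n.primeFactors with hSdef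
  have hSprime : ∀ p ∈ S, p.Prime := fun p hp => Nat.prime_of_mem_primeFactors hp
  have hSdvd : ∀ p ∈ S, p ∣ n := fun p hp => Nat.dvd_of_mem_primeFactors hp
  have hSodd : ∀ p ∈ S, p ≠ 2 := by
    intro p hp h2
    rcases hodd with ⟨k, hk⟩
    obtain ⟨c, hc⟩ := hSdvd p hp
    rw [h2] at hc
    omega
  set e : ℕ → ℕ := fun p => n.factorization p with hedef
  have heeven : ∀ p ∈ S, Even (e p) := by
    intro p hp
    obtain ⟨m, hm⟩ := hsq
    have hm0 : m ≠ 0 := by rintro rfl; omega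
    have : n.factorization = m.factorization + m.factorization := by
      rw [hm]; exact Nat.factorization_mul hm0 hm0
    exact ⟨m.factorization p, by rw [hedef]; simp [this]⟩
  have hepos : ∀ p ∈ S, 1 ≤ e p := by
    intro p hp
    exact (hSprime p hp).factorization_pos_of_dvd (by omega) (hSdvd p hp)
  -- nonresidues
  have hNRex : ∀ p : ℕ, ∃ z : ℤ, p ∈ S → (¬(p:ℤ) ∣ z ∧ ¬ IsSquare ((z:ℤ) : ZMod p)) := by
    intro p
    by_cases hp : p ∈ S
    · haveI : Fact p.Prime := ⟨hSprime p hp⟩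
      obtain ⟨b, hb⟩ := FiniteField.exists_nonsquare
        (F := ZMod p) (by rw [ZMod.ringChar_zmod_n]; exact hSodd p hp)
      refine ⟨(b.val : ℤ), fun _ => ⟨?_, ?_⟩⟩
      · rw [← ZMod.intCast_zmod_eq_zero_iff_dvd]
        push_cast
        rw [ZMod.natCast_val, ZMod.cast_id]
        intro h0
        exact hb (h0 ▸ ⟨0, by ring⟩)
      · push_cast
        rwa [ZMod.natCast_val, ZMod.cast_id]
    · exact ⟨0, fun h => absurd h hp⟩
  choose ν hν using hNRex
  have hScop : ∀ a ∈ S, ∀ b ∈ S, a ≠ b → Nat.Coprime a b := fun a ha b hb hab =>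
    (Nat.coprime_primes (hSprime a ha) (hSprime b hb)).mpr hab
  obtain ⟨N, hN⟩ := crtFinset S id ν (by simpa using hScop)
  obtain ⟨X3, hX3⟩ := crtFinset S (fun p => p ^ e p) (fun p => (p:ℤ)) (by
    intro a ha b hb hab
    exact Nat.Coprime.pow _ _ (hScop a ha b hb hab))
  have hNcast : ∀ p ∈ S, ((N:ℤ) : ZMod p) = ((ν p : ℤ) : ZMod p) := by
    intro p hp
    haveI : NeZero p := ⟨(hSprime p hp).ne_zero⟩
    rw [ZMod.intCast_eq_intCast_iff]
    exact (Int.ModEq.symm (Int.modEq_iff_dvd.mpr (by simpa using hN p hp)))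
  have hNp : ∀ p ∈ S, ¬ (p:ℤ) ∣ N := by
    intro p hp h
    apply (hν p hp).1
    rw [← ZMod.intCast_zmod_eq_zero_iff_dvd] at h ⊢
    rw [← hNcast p hp]
    exact h
  have hNnsq : ∀ p ∈ S, ¬ IsSquare ((N:ℤ) : ZMod p) := by
    intro p hp h
    rw [hNcast p hp] at h
    exact (hν p hp).2 h
  set XI : Fin 4 → ℤ := ![1, -N, X3, -N * X3] with hXIdef
  refine ⟨fun i => ((XI i : ℤ) : ZMod n), ?_⟩
  rintro ⟨K, hKne, w, hwmem, hwsum⟩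
  obtain ⟨i0, hi0⟩ := hKne
  obtain ⟨p, hpS, hpc⟩ := existsComponent hn (hwmem i0 hi0).1
  have hp := hSprime p hpS
  haveI : Fact p.Prime := ⟨hp⟩
  set q := p ^ e p with hqdef
  have hqdvd : q ∣ n := Nat.ordProj_dvd n p
  haveI : NeZero q := ⟨pow_ne_zero _ hp.ne_zero⟩
  have hqcast : ((q:ℕ) : ℤ) = (p:ℤ)^(e p) := by push_cast [hqdef]; ring
  set φ : ZMod n →+* ZMod q := ZMod.castHom hqdvd (ZMod q) with hφdef
  have hφval : ∀ u : ZMod n, φ u = ((u.val : ℕ) : ZMod q) := by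
    intro u
    rw [hφdef, ZMod.castHom_apply, ZMod.natCast_val]
  have hφw : φ (w i0) ≠ 0 := by
    intro h0
    apply hpc
    rw [hφval] at h0
    rw [ZMod.natCast_eq_zero_iff] at h0
    have := Int.natCast_dvd_natCast.mpr h0
    rwa [hqcast] at this
  set K' := K.filter (fun i => φ (w i) ≠ 0) with hK'def
  have hK'sub : K' ⊆ K := Finset.filter_subset _ _
  have hi0' : i0 ∈ K' := Finset.mem_filter.mpr ⟨hi0, hφw⟩
  -- the component sum
  have hsum0 : ∑ i ∈ K', φ (w i) * ((XI i : ℤ) : ZMod q) = 0 := by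
    have h1 := congrArg φ hwsum
    rw [map_sum, map_zero] at h1
    have h2 : ∀ i ∈ K, φ (w i * ((XI i : ℤ) : ZMod n)) = φ (w i) * ((XI i : ℤ) : ZMod q) := by
      intro i _
      rw [map_mul, map_intCast]
    rw [Finset.sum_congr rfl h2] at h1
    rw [← h1]
    refine Finset.sum_filter_of_ne ?_
    intro i hi hne0 h0
    exact hne0 (by rw [h0, zero_mul])
  -- square roots mod q as integers
  have hcex : ∀ i : Fin 4, ∃ ci : ℤ, i ∈ K' → (((ci : ℤ) : ZMod q))^2 = φ (w i) := by
    intro i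
    by_cases hi : i ∈ K'
    · obtain ⟨-, y, hy⟩ := hwmem i (hK'sub hi)
      refine ⟨(((φ y).val : ℕ) : ℤ), fun _ => ?_⟩
      push_cast
      rw [ZMod.natCast_val, ZMod.cast_id, ← map_pow, hy]
    · exact ⟨0, fun h => absurd h hi⟩
  choose c hc using hcex
  have hcnd : ∀ i ∈ K', ¬ ((p:ℤ)^(e p) ∣ (c i)^2) := by
    intro i hi hdvd
    have h0 : (((c i)^2 : ℤ) : ZMod q) = 0 := by
      rw [ZMod.intCast_zmod_eq_zero_iff_dvd, hqcast]
      exact hdvd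
    push_cast at h0
    rw [hc i hi] at h0
    exact (Finset.mem_filter.mp hi).2 h0
  -- decompositions
  have hdec : ∀ i ∈ K', ∃ (k:ℕ) (d:ℤ), (c i)^2 = (p:ℤ)^(2*k) * d^2 ∧ ¬(p:ℤ)∣d ∧ 2*k < e p := by
    intro i hi
    have hci0 : c i ≠ 0 := by
      rintro h0
      exact hcnd i hi (by rw [h0]; simp)
    obtain ⟨k, d, hcd, hd⟩ := valDecomp hp hci0
    refine ⟨k, d, by rw [hcd]; exact sq_expand p k d, hd, ?_⟩
    by_contra hk2
    push_neg at hk2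
    apply hcnd i hi
    rw [hcd, sq_expand]
    exact (pow_dvd_pow _ hk2).mul_right _
  -- integer divisibility of the sum
  have hdvdS : (p:ℤ)^(e p) ∣ ∑ i ∈ K', (c i)^2 * XI i := by
    rw [← hqcast, ← ZMod.intCast_zmod_eq_zero_iff_dvd]
    push_cast
    rw [← hsum0]
    refine Finset.sum_congr rfl fun i hi => ?_
    rw [← hc i hi]
  -- explode the sum into four ite terms
  set T0 : ℤ := if 0 ∈ K' then (c 0)^2 else 0 with hT0def
  set T1 : ℤ := if 1 ∈ K' then (c 1)^2 * (-N) else 0 with hT1def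
  set U2 : ℤ := if 2 ∈ K' then (c 2)^2 else 0 with hU2def
  set U3 : ℤ := if 3 ∈ K' then (c 3)^2 * (-N) else 0 with hU3def
  have hX3d : (p:ℤ)^(e p) ∣ X3 - p := by
    have := hX3 p hpS
    rwa [hqcast] at this  -- careful: hX3 gives (↑(p ^ e p)) ∣ X3 - ↑p
  have hsplit : ∑ i ∈ K', (c i)^2 * XI i
      = (T0 + T1 + (p:ℤ)*U2 + (p:ℤ)*U3)
        + ((if 2 ∈ K' then (c 2)^2 * (X3 - p) else 0)
          + (if 3 ∈ K' then (c 3)^2 * (-N) * (X3 - p) else 0)) := by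
    have h4 : ∑ i ∈ K', (c i)^2 * XI i = ∑ i : Fin 4, if i ∈ K' then (c i)^2 * XI i else 0 := by
      rw [Finset.sum_ite_mem, Finset.univ_inter]
    rw [h4, Fin.sum_univ_four, hT0def, hT1def, hU2def, hU3def]
    have e0 : XI 0 = 1 := by rw [hXIdef]; rfl
    have e1 : XI 1 = -N := by rw [hXIdef]; rfl
    have e2 : XI 2 = X3 := by rw [hXIdef]; rfl
    have e3 : XI 3 = -N * X3 := by rw [hXIdef]; rfl
    rw [e0, e1, e2, e3]
    by_cases h0 : (0:Fin 4) ∈ K' <;> by_cases h1 : (1:Fin 4) ∈ K' <;>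
      by_cases h2 : (2:Fin 4) ∈ K' <;> by_cases h3 : (3:Fin 4) ∈ K' <;>
      simp only [if_pos, if_neg, h0, h1, h2, h3, if_true, if_false] <;> ring
  have hmain : (p:ℤ)^(e p) ∣ T0 + T1 + (p:ℤ)*U2 + (p:ℤ)*U3 := by
    have hE : (p:ℤ)^(e p) ∣ ((if 2 ∈ K' then (c 2)^2 * (X3 - p) else 0)
        + (if 3 ∈ K' then (c 3)^2 * (-N) * (X3 - p) else 0)) := by
      refine dvd_add ?_ ?_ <;> split
      · exact hX3d.mul_left _
      · exact dvd_zero _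
      · exact hX3d.mul_left _
      · exact dvd_zero _
    have := dvd_sub (hsplit ▸ hdvdS) hE
    simpa using this
  -- apply the core contradiction
  refine lbcore hp (heeven p hpS) (hNp p hpS) (hNnsq p hpS) ?_ ?_ ?_ ?_ ?_ hmain
  · rw [hT0def]; split
    · exact Or.inr (hdec 0 (by assumption))
    · exact Or.inl rfl
  · rw [hT1def]; split
    · obtain ⟨k, d, h1, h2, h3⟩ := hdec 1 (by assumption)
      exact Or.inr ⟨k, d, by rw [h1], h2, h3⟩
    · exact Or.inl rfl
  · rw [hU2def]; split
    · exact Or.inr (hdec 2 (by assumption))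
    · exact Or.inl rfl
  · rw [hU3def]; split
    · obtain ⟨k, d, h1, h2, h3⟩ := hdec 3 (by assumption)
      exact Or.inr ⟨k, d, by rw [h1], h2, h3⟩
    · exact Or.inl rfl
  · -- not all zero
    rintro ⟨hz0, hz1, hz2, hz3⟩
    have hNne : N ≠ 0 := by
      rintro rfl
      exact hNp p hpS (dvd_zero _)
    have hczero : ∀ i ∈ K', (c i)^2 ≠ 0 := by
      intro i hi h0
      exact hcnd i hi (by rw [h0]; exact dvd_zero _)
    have hi4 : i0 = 0 ∨ i0 = 1 ∨ i0 = 2 ∨ i0 = 3 := by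
      rcases i0 with ⟨iv, hlt⟩
      interval_cases iv
      · exact Or.inl rfl
      · exact Or.inr (Or.inl rfl)
      · exact Or.inr (Or.inr (Or.inl rfl))
      · exact Or.inr (Or.inr (Or.inr rfl))
    rcases hi4 with rfl | rfl | rfl | rfl
    · rw [hT0def, if_pos hi0'] at hz0
      exact hczero _ hi0' hz0
    · rw [hT1def, if_pos hi0'] at hz1
      rcases mul_eq_zero.mp hz1 with h | h
      · exact hczero _ hi0' h
      · exact hNne (neg_eq_zero.mp h)
    · rw [hU2def, if_pos hi0'] at hz2
      exact hczero _ hi0' hz2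
    · rw [hU3def, if_pos hi0'] at hz3
      rcases mul_eq_zero.mp hz3 with h | h
      · exact hczero _ hi0' h
      · exact hNne (neg_eq_zero.mp h)


lemma hasWZS_comp {n k : ℕ} (A : Set (ZMod n)) (x : Fin 4 → ZMod n) (hk : k ≤ 4)
    (h : HasWZSSubseq A (x ∘ Fin.castLE hk)) : HasWZSSubseq A x := by
  classical
  obtain ⟨I, hI, w, hmem, hsum⟩ := h
  refine ⟨I.map ⟨Fin.castLE hk, Fin.castLE_injective hk⟩, by
      rwa [Finset.map_nonempty], Function.extend (Fin.castLE hk) w 0, ?_, ?_⟩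
  · intro j hj
    obtain ⟨i, hi, rfl⟩ := Finset.mem_map.mp hj
    simp only [Function.Embedding.coeFn_mk]
    rw [Function.Injective.extend_apply (Fin.castLE_injective hk)]
    exact hmem i hi
  · rw [Finset.sum_map]
    rw [← hsum]
    refine Finset.sum_congr rfl fun i hi => ?_
    simp only [Function.Embedding.coeFn_mk]
    rw [Function.Injective.extend_apply (Fin.castLE_injective hk)]
    rfl


theorem stmt18 (n : ℕ) (hn : 1 < n) (hodd : Odd n) (hsq : IsSquare n) :
    IsLeast {k | DConst n (nonzeroSquares n) k} 5 := by
  constructor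
  · exact upperBound n hn hodd
  · intro k hk
    by_contra hlt
    push_neg at hlt
    obtain ⟨x, hx⟩ := lowerBoundSeq n hn hodd hsq
    obtain ⟨hkpos, hall⟩ := hk
    exact hx (hasWZS_comp _ x (show k ≤ 4 by omega) (hall (x ∘ Fin.castLE (by omega))))
end

section
/- Let p ≥ 7 be a prime and r ≥ 4 be even. Then every sequence of 5 elements in Z/p^rZ has a subsequence of consecutive terms which is an S(p^r)*-weighted zero-sum sequence; that is, C_{S(p^r)*} ≤ 5. -/
open Finset Pointwise

section modp
variable {p : ℕ} [Fact p.Prime]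

def sqSet (a : ZMod p) : Finset (ZMod p) :=
  (Finset.univ.filter (fun x : ZMod p => x ≠ 0)).image (fun x => a * x ^ 2)

lemma sqSet_nonempty (a : ZMod p) : (sqSet a).Nonempty := by
  refine ⟨a * 1 ^ 2, Finset.mem_image.2 ⟨1, ?_, rfl⟩⟩
  simp

lemma card_sqSet (a : ZMod p) (ha : a ≠ 0) : p - 1 ≤ 2 * (sqSet a).card := by
  have hcard : (Finset.univ.filter (fun x : ZMod p => x ≠ 0)).card = p - 1 := by
    rw [Finset.filter_ne' Finset.univ 0, Finset.card_erase_of_mem (Finset.mem_univ _)]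
    simp [ZMod.card]
  have h := Finset.card_le_mul_card_image (f := fun x : ZMod p => a * x ^ 2)
    (Finset.univ.filter (fun x : ZMod p => x ≠ 0)) 2 ?_
  · rw [hcard] at h; exact h
  · intro b hb
    obtain ⟨x0, hx0, hfx0⟩ := Finset.mem_image.1 hb
    have hsub : (Finset.univ.filter (fun x : ZMod p => x ≠ 0)).filter
        (fun x => a * x ^ 2 = b) ⊆ {x0, -x0} := by
      intro x hx
      simp only [Finset.mem_filter] at hx
      have : a * x ^ 2 = a * x0 ^ 2 := by rw [hx.2, hfx0]
      have hx2 : x ^ 2 = x0 ^ 2 := mul_left_cancel₀ ha this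
      have : (x - x0) * (x + x0) = 0 := by linear_combination hx2
      rcases mul_eq_zero.1 this with h | h
      · simp [Finset.mem_insert, sub_eq_zero.1 h]
      · have : x = -x0 := eq_neg_of_add_eq_zero_left h
        simp [this]
    calc _ ≤ ({x0, -x0} : Finset (ZMod p)).card := Finset.card_le_card hsub
    _ ≤ 2 := Finset.card_insert_le _ _ |>.trans (by simp)

lemma cover_modp (hp7 : 7 ≤ p) (a b c : ZMod p) (ha : a ≠ 0) (hb : b ≠ 0) (hc : c ≠ 0)
    (d : ZMod p) :
    ∃ x y z : ZMod p, x ≠ 0 ∧ y ≠ 0 ∧ z ≠ 0 ∧ a * x ^ 2 + b * y ^ 2 + c * z ^ 2 = d := by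
  have hp : p.Prime := Fact.out
  have h1 := ZMod.cauchy_davenport hp (sqSet_nonempty a) (sqSet_nonempty b)
  have h2 := ZMod.cauchy_davenport hp (Finset.Nonempty.add (sqSet_nonempty a) (sqSet_nonempty b))
    (sqSet_nonempty c)
  have ca := card_sqSet a ha
  have cb := card_sqSet b hb
  have cc := card_sqSet c hc
  have hcard : p ≤ (sqSet a + sqSet b + sqSet c).card := by
    simp only [min_def] at h1 h2
    split_ifs at h1 h2 <;> omega
  have huniv : sqSet a + sqSet b + sqSet c = Finset.univ := by
    apply Finset.eq_univ_of_card
    have hle : (sqSet a + sqSet b + sqSet c).card ≤ Fintype.card (ZMod p) :=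
      Finset.card_le_univ _
    rw [ZMod.card] at hle ⊢
    omega
  have hd : d ∈ sqSet a + sqSet b + sqSet c := huniv ▸ Finset.mem_univ d
  obtain ⟨u, hu, w, hw, huw⟩ := Finset.mem_add.1 hd
  obtain ⟨v1, hv1, v2, hv2, hv⟩ := Finset.mem_add.1 hu
  obtain ⟨x, hx, hxv⟩ := Finset.mem_image.1 hv1
  obtain ⟨y, hy, hyv⟩ := Finset.mem_image.1 hv2
  obtain ⟨z, hz, hzv⟩ := Finset.mem_image.1 hw
  refine ⟨x, y, z, (Finset.mem_filter.1 hx).2, (Finset.mem_filter.1 hy).2,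
    (Finset.mem_filter.1 hz).2, ?_⟩
  linear_combination hxv + hyv + hzv + hv + huw
end modp

lemma natCast_val_intCast {p : ℕ} [NeZero p] (X : ZMod p) : ((X.val : ℤ) : ZMod p) = X := by
  push_cast
  simp [ZMod.natCast_val, ZMod.cast_id]

lemma not_dvd_val {p : ℕ} [Fact p.Prime] (X : ZMod p) (hX : X ≠ 0) : ¬ (p:ℤ) ∣ (X.val : ℤ) := by
  intro h
  rw [Int.natCast_dvd_natCast] at h
  have h1 : X.val < p := ZMod.val_lt X
  have h2 : X.val ≠ 0 := fun h0 => hX (by rwa [← ZMod.val_eq_zero])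
  have := Nat.le_of_dvd (Nat.pos_of_ne_zero h2) h
  omega

lemma cover_int (p : ℕ) (hp : p.Prime) (hp7 : 7 ≤ p) :
    ∀ s : ℕ, 1 ≤ s → ∀ d a b c : ℤ, ¬ (p:ℤ) ∣ a → ¬ (p:ℤ) ∣ b → ¬ (p:ℤ) ∣ c →
    ∃ x y z : ℤ, ¬(p:ℤ) ∣ x ∧ ¬(p:ℤ) ∣ y ∧ ¬(p:ℤ) ∣ z ∧
      (p:ℤ)^s ∣ (a*x^2 + b*y^2 + c*z^2 - d) := by
  haveI : Fact p.Prime := ⟨hp⟩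
  intro s hs
  induction s, hs using Nat.le_induction with
  | base =>
    intro d a b c ha hb hc
    have ha' : (a : ZMod p) ≠ 0 := fun h => ha ((ZMod.intCast_zmod_eq_zero_iff_dvd a p).1 h)
    have hb' : (b : ZMod p) ≠ 0 := fun h => hb ((ZMod.intCast_zmod_eq_zero_iff_dvd b p).1 h)
    have hc' : (c : ZMod p) ≠ 0 := fun h => hc ((ZMod.intCast_zmod_eq_zero_iff_dvd c p).1 h)
    obtain ⟨X, Y, Z, hX, hY, hZ, hsum⟩ := cover_modp (by exact_mod_cast hp7)
      (a : ZMod p) (b : ZMod p) (c : ZMod p) ha' hb' hc' (d : ZMod p)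
    refine ⟨(X.val : ℤ), (Y.val : ℤ), (Z.val : ℤ), not_dvd_val X hX, not_dvd_val Y hY,
      not_dvd_val Z hZ, ?_⟩
    rw [pow_one, ← ZMod.intCast_zmod_eq_zero_iff_dvd]
    push_cast
    simp only [ZMod.natCast_val, ZMod.cast_id]
    linear_combination hsum
  | succ s hs ih =>
    intro d a b c ha hb hc
    obtain ⟨x, y, z, hx, hy, hz, hdvd⟩ := ih d a b c ha hb hc
    obtain ⟨m, hm⟩ := hdvd
    -- choose t with p ∣ m + 2*a*x*t
    have h2 : ¬ (p:ℤ) ∣ 2 := by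
      intro h
      have := Int.le_of_dvd (by norm_num) h
      omega
    have hax : ((2 * a * x : ℤ) : ZMod p) ≠ 0 := by
      push_cast
      intro h
      rcases mul_eq_zero.1 h with h' | h'
      · rcases mul_eq_zero.1 h' with h'' | h''
        · exact h2 ((ZMod.intCast_zmod_eq_zero_iff_dvd 2 p).1 (by exact_mod_cast h''))
        · exact ha ((ZMod.intCast_zmod_eq_zero_iff_dvd a p).1 h'')
      · exact hx ((ZMod.intCast_zmod_eq_zero_iff_dvd x p).1 h')
    set g : ZMod p := (-(m : ZMod p)) * ((2 * a * x : ℤ) : ZMod p)⁻¹ with hg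
    set t : ℤ := (g.val : ℤ) with ht
    have hdt : (p:ℤ) ∣ (m + 2*a*x*t) := by
      rw [← ZMod.intCast_zmod_eq_zero_iff_dvd]
      have hcast : ((m + 2*a*x*t : ℤ) : ZMod p)
          = (m : ZMod p) + ((2*a*x : ℤ) : ZMod p) * g := by
        rw [ht]
        push_cast [ZMod.natCast_val, ZMod.cast_id]
        ring
      rw [hcast, hg]
      have h1 : ((2*a*x : ℤ) : ZMod p) * (((2*a*x : ℤ) : ZMod p))⁻¹ = 1 := mul_inv_cancel₀ hax
      linear_combination (-(m : ZMod p)) * h1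
    obtain ⟨k, hk⟩ := hdt
    refine ⟨x + t * (p:ℤ)^s, y, z, ?_, hy, hz, ?_⟩
    · intro h
      apply hx
      have h2' : (p:ℤ) ∣ t * (p:ℤ)^s := Dvd.dvd.mul_left (dvd_pow_self (p:ℤ) (by omega)) t
      simpa using dvd_sub h h2'
    · have key : a*(x + t * (p:ℤ)^s)^2 + b*y^2 + c*z^2 - d
          = (p:ℤ)^s * ((p:ℤ)*k) + a*t^2*((p:ℤ)^s*(p:ℤ)^s) := by
        linear_combination hm + (p:ℤ)^s * hk
      rw [key, pow_succ]
      refine dvd_add (mul_dvd_mul_left _ (dvd_mul_right _ _)) ?_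
      refine Dvd.dvd.mul_left ?_ _
      exact mul_dvd_mul_left _ (dvd_pow_self (p:ℤ) (by omega))

section classify
variable {p r : ℕ}

lemma pow_mem_nonzeroSquares' (hp : p.Prime) (e : ℕ) (he : Even e) (her : e < r) :
    ((p : ZMod (p^r)))^e ≠ 0 ∧ ∃ y : ZMod (p^r), y ^ 2 = ((p : ZMod (p^r)))^e := by
  constructor
  · intro h
    have : (((p^e : ℕ)) : ZMod (p^r)) = 0 := by push_cast; exact h
    rw [ZMod.natCast_eq_zero_iff] at this
    have := (Nat.pow_dvd_pow_iff_le_right hp.one_lt).1 this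
    omega
  · refine ⟨((p : ZMod (p^r)))^(e/2), ?_⟩
    rw [← pow_mul]
    congr 1
    obtain ⟨k, hk⟩ := he
    omega

lemma classify (hp : p.Prime) (hr : 4 ≤ r) (hre : Even r) (z : ZMod (p^r)) :
    (∃ q, (q ≠ 0 ∧ ∃ y : ZMod (p^r), y ^ 2 = q) ∧ q * z = 0) ∨ IsUnit z ∨
      ∃ u : ZMod (p^r), IsUnit u ∧ z = (p : ZMod (p^r)) * u := by
  haveI : Fact (1 < p^r) := ⟨Nat.one_lt_pow (by omega) hp.one_lt⟩
  by_cases hz0 : z = 0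
  · exact Or.inl ⟨1, ⟨one_ne_zero, 1, one_pow 2⟩, by rw [hz0, mul_zero]⟩
  set n := z.val with hn
  have hnz : (n : ZMod (p^r)) = z := by simp [hn, ZMod.natCast_val, ZMod.cast_id]
  have hn0 : n ≠ 0 := fun h => hz0 (by rwa [← ZMod.val_eq_zero, ← hn])
  set a := n.factorization p with hafact
  set m := n / p ^ a with hmdef
  have hnm : p ^ a * m = n := Nat.ordProj_mul_ordCompl_eq_self n p
  have hm : ¬ p ∣ m := Nat.not_dvd_ordCompl hp hn0
  have hum : IsUnit ((m : ℕ) : ZMod (p^r)) := by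
    rw [ZMod.isUnit_iff_coprime]
    exact Nat.Coprime.pow_right r ((hp.coprime_iff_not_dvd.2 hm).symm)
  have har : a < r := by
    have h1 : p ^ a ≤ n := Nat.le_of_dvd (Nat.pos_of_ne_zero hn0) (Nat.ordProj_dvd n p)
    have h2 : n < p ^ r := by rw [hn]; exact ZMod.val_lt z
    exact (Nat.pow_lt_pow_iff_right hp.one_lt).1 (lt_of_le_of_lt h1 h2)
  have hzc : z = ((p ^ a * m : ℕ) : ZMod (p^r)) := by rw [hnm, hnz]
  rcases Nat.lt_or_ge a 2 with ha2 | ha2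
  · interval_cases a
    · right; left
      rw [hzc]
      simpa using hum
    · right; right
      refine ⟨(m : ZMod (p^r)), hum, ?_⟩
      rw [hzc]; push_cast; ring
  · left
    set e := if Even a then r - a else r - a + 1 with he
    have hee : Even e := by
      rcases hre with ⟨rr, hrr⟩
      rcases Nat.even_or_odd a with hea | hoa
      · rw [he, if_pos hea]
        rcases hea with ⟨aa, haa⟩
        exact ⟨rr - aa, by omega⟩
      · rw [he, if_neg (by rw [Nat.even_iff]; rw [Nat.odd_iff] at hoa; omega)]
        rcases hoa with ⟨aa, haa⟩
        exact ⟨rr - aa, by omega⟩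
    have her : e < r := by
      rcases Nat.even_or_odd a with hea | hoa
      · rw [he, if_pos hea]; omega
      · rw [he, if_neg (by rw [Nat.even_iff]; rw [Nat.odd_iff] at hoa; omega)]
        rcases hoa with ⟨aa, haa⟩
        omega
    have hea : r ≤ e + a := by
      rcases Nat.even_or_odd a with h | h
      · rw [he, if_pos h]; omega
      · rw [he, if_neg (by rw [Nat.even_iff]; rw [Nat.odd_iff] at h; omega)]; omega
    obtain ⟨hq0, hqsq⟩ := pow_mem_nonzeroSquares' hp e hee her
    refine ⟨((p : ZMod (p^r)))^e, ⟨hq0, hqsq⟩, ?_⟩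
    rw [hzc]
    push_cast
    have : (p : ZMod (p^r))^e * ((p:ZMod (p^r)) ^ a * (m:ZMod (p^r)))
        = ((p ^ (e+a) * m : ℕ) : ZMod (p^r)) := by push_cast; ring
    rw [this]
    exact (ZMod.natCast_eq_zero_iff _ _).2 (Dvd.dvd.mul_right (pow_dvd_pow p hea) m)
end classify

lemma intsq_mem {p r : ℕ} (hp : p.Prime) (hr : 1 ≤ r) (α : ℤ) (hα : ¬(p:ℤ) ∣ α) :
    ((α : ZMod (p^r)))^2 ≠ 0 ∧ ∃ y : ZMod (p^r), y^2 = ((α : ZMod (p^r)))^2 := by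
  refine ⟨?_, ⟨(α : ZMod (p^r)), rfl⟩⟩
  intro h
  have h2 : ((α^2 : ℤ) : ZMod (p^r)) = 0 := by push_cast; exact h
  rw [ZMod.intCast_zmod_eq_zero_iff_dvd] at h2
  push_cast at h2
  have hp' : Prime (p:ℤ) := Nat.prime_iff_prime_int.mp hp
  have hd : (p:ℤ) ∣ α^2 := dvd_trans (dvd_pow_self (p:ℤ) (by omega)) h2
  exact hα (hp'.dvd_of_dvd_pow hd)

lemma not_dvd_val_of_isUnit {p r : ℕ} (hp : p.Prime) (hr : 1 ≤ r) {z : ZMod (p^r)}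
    (h : IsUnit z) : ¬ (p:ℤ) ∣ (z.val : ℤ) := by
  obtain ⟨u, rfl⟩ := h
  have hc := ZMod.val_coe_unit_coprime u
  intro hd
  rw [Int.natCast_dvd_natCast] at hd
  have hg : p ∣ Nat.gcd ((u : ZMod (p^r)).val) (p^r) :=
    Nat.dvd_gcd hd (dvd_pow_self p (by omega))
  rw [Nat.Coprime] at hc
  rw [hc] at hg
  have := Nat.le_of_dvd (by norm_num) hg
  have := hp.two_le
  omega

set_option maxHeartbeats 4000000 in
theorem stmt19 (p : ℕ) (hp : p.Prime) (hp7 : 7 ≤ p) (r : ℕ) (hr : 4 ≤ r) (hre : Even r) :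
    (∀ x : Fin 5 → ZMod (p ^ r), HasConsecWZS (nonzeroSquares (p ^ r)) x) ∧
    sInf {k | CConst (p ^ r) (nonzeroSquares (p ^ r)) k} ≤ 5 := by
  haveI : Fact p.Prime := ⟨hp⟩
  haveI : Fact (1 < p^r) := ⟨Nat.one_lt_pow (by omega) hp.one_lt⟩
  have hmain : ∀ x : Fin 5 → ZMod (p ^ r), HasConsecWZS (nonzeroSquares (p ^ r)) x := by
    intro x
    by_cases hk : ∃ t, ∃ q, q ∈ nonzeroSquares (p^r) ∧ q * x t = 0
    · obtain ⟨t, q, hq, hqx⟩ := hk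
      refine ⟨t, t, le_refl t, fun _ => q, fun s _ => hq, ?_⟩
      rw [Finset.Icc_self, Finset.sum_singleton, hqx]
    · push_neg at hk
      have hcl : ∀ t, IsUnit (x t) ∨ ∃ u, IsUnit u ∧ x t = (p : ZMod (p^r)) * u := by
        intro t
        rcases classify hp hr hre (x t) with ⟨q, hq, hqz⟩ | h | h
        · exact absurd hqz (hk t q ⟨hq.1, hq.2⟩)
        · exact Or.inl h
        · exact Or.inr h
      set U : Finset (Fin 5) := Finset.univ.filter (fun t => IsUnit (x t)) with hU
      set V : Finset (Fin 5) := Finset.univ.filter (fun t => ¬ IsUnit (x t)) with hV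
      have hcards : U.card + V.card = 5 := by
        rw [hU, hV]
        rw [Finset.card_filter_add_card_filter_not]
        simp
      have hIcc : Finset.Icc (0 : Fin 5) 4 = Finset.univ := by
        apply Finset.eq_univ_of_forall
        intro t
        rw [Finset.mem_Icc]
        exact ⟨Fin.zero_le t, by omega⟩
      rcases le_or_gt 3 U.card with h3 | h3
      · -- three unit terms
        obtain ⟨T, hTU, hT3⟩ := Finset.exists_subset_card_eq h3
        obtain ⟨t1, t2, t3, h12, h13, h23, rfl⟩ := Finset.card_eq_three.1 hT3
        have hu1 : IsUnit (x t1) := (Finset.mem_filter.1 (hTU (by simp))).2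
        have hu2 : IsUnit (x t2) := (Finset.mem_filter.1 (hTU (by simp))).2
        have hu3 : IsUnit (x t3) := (Finset.mem_filter.1 (hTU (by simp))).2
        set S := ∑ t ∈ Finset.univ \ {t1, t2, t3}, x t with hS
        obtain ⟨α, β, γ, hα, hβ, hγ, hdvd⟩ := cover_int p hp hp7 r (by omega)
          (-(S.val : ℤ)) ((x t1).val : ℤ) ((x t2).val : ℤ) ((x t3).val : ℤ)
          (not_dvd_val_of_isUnit hp (by omega) hu1)
          (not_dvd_val_of_isUnit hp (by omega) hu2)
          (not_dvd_val_of_isUnit hp (by omega) hu3)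
        have hzero : ((((x t1).val : ℤ) * α^2 + ((x t2).val : ℤ) * β^2 + ((x t3).val : ℤ) * γ^2
            - (-(S.val : ℤ)) : ℤ) : ZMod (p^r)) = 0 := by
          rw [ZMod.intCast_zmod_eq_zero_iff_dvd]
          push_cast
          push_cast at hdvd
          convert hdvd using 2
        set w : Fin 5 → ZMod (p^r) := fun t =>
          if t = t1 then ((α : ZMod (p^r)))^2 else if t = t2 then ((β : ZMod (p^r)))^2
          else if t = t3 then ((γ : ZMod (p^r)))^2 else 1 with hw
        refine ⟨0, 4, by omega, w, ?_, ?_⟩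
        · intro t _
          simp only [hw]
          split_ifs
          · exact intsq_mem hp (by omega) α hα
          · exact intsq_mem hp (by omega) β hβ
          · exact intsq_mem hp (by omega) γ hγ
          · exact ⟨one_ne_zero, 1, one_pow 2⟩
        · rw [hIcc, ← Finset.sum_sdiff (Finset.subset_univ ({t1, t2, t3} : Finset (Fin 5)))]
          have hrest : ∑ t ∈ Finset.univ \ {t1, t2, t3}, w t * x t = S := by
            rw [hS]
            apply Finset.sum_congr rfl
            intro t ht
            simp only [Finset.mem_sdiff, Finset.mem_insert, Finset.mem_singleton] at ht
            simp only [hw]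
            rw [if_neg (fun h => ht.2 (Or.inl h)), if_neg (fun h => ht.2 (Or.inr (Or.inl h))),
              if_neg (fun h => ht.2 (Or.inr (Or.inr h))), one_mul]
          have htrip : ∑ t ∈ ({t1, t2, t3} : Finset (Fin 5)), w t * x t
              = ((α : ZMod (p^r)))^2 * x t1 + ((β : ZMod (p^r)))^2 * x t2
                + ((γ : ZMod (p^r)))^2 * x t3 := by
            rw [Finset.sum_insert (by simp [h12, h13]), Finset.sum_pair h23]
            simp only [hw, if_pos rfl, if_neg (Ne.symm h12), if_neg (Ne.symm h13),
              if_neg (Ne.symm h23), eq_self_iff_true, if_true]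
            ring
          rw [hrest, htrip]
          push_cast [ZMod.natCast_val, ZMod.cast_id] at hzero
          linear_combination hzero
      · -- three non-unit terms
        have h3' : 3 ≤ V.card := by omega
        obtain ⟨T, hTV, hT3⟩ := Finset.exists_subset_card_eq h3'
        obtain ⟨t1, t2, t3, h12, h13, h23, rfl⟩ := Finset.card_eq_three.1 hT3
        have hn1 : ¬ IsUnit (x t1) := (Finset.mem_filter.1 (hTV (by simp))).2
        have hn2 : ¬ IsUnit (x t2) := (Finset.mem_filter.1 (hTV (by simp))).2
        have hn3 : ¬ IsUnit (x t3) := (Finset.mem_filter.1 (hTV (by simp))).2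
        obtain ⟨u1, hu1, hx1⟩ := (hcl t1).resolve_left hn1
        obtain ⟨u2, hu2, hx2⟩ := (hcl t2).resolve_left hn2
        obtain ⟨u3, hu3, hx3⟩ := (hcl t3).resolve_left hn3
        set S := ∑ t ∈ Finset.univ \ {t1, t2, t3}, x t with hS
        obtain ⟨α, β, γ, hα, hβ, hγ, hdvd⟩ := cover_int p hp hp7 (r-1) (by omega)
          (-((p:ℤ)^(r-3) * (S.val : ℤ))) ((u1.val : ℤ)) ((u2.val : ℤ)) ((u3.val : ℤ))
          (not_dvd_val_of_isUnit hp (by omega) hu1)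
          (not_dvd_val_of_isUnit hp (by omega) hu2)
          (not_dvd_val_of_isUnit hp (by omega) hu3)
        have hd2 : ((p^r : ℕ) : ℤ) ∣ (((u1.val : ℤ) * α^2 + (u2.val : ℤ) * β^2
            + (u3.val : ℤ) * γ^2 - (-((p:ℤ)^(r-3) * (S.val : ℤ)))) * (p:ℤ)) := by
          push_cast
          have hr1 : (p:ℤ)^r = (p:ℤ)^(r-1) * (p:ℤ) := by
            rw [← pow_succ]
            congr 1
            omega
          rw [hr1]
          exact mul_dvd_mul_right (by push_cast at hdvd; convert hdvd using 2) _
        have hzero := (ZMod.intCast_zmod_eq_zero_iff_dvd _ (p^r)).2 hd2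
        set w : Fin 5 → ZMod (p^r) := fun t =>
          if t = t1 then ((α : ZMod (p^r)))^2 else if t = t2 then ((β : ZMod (p^r)))^2
          else if t = t3 then ((γ : ZMod (p^r)))^2 else ((p : ZMod (p^r)))^(r-2) with hw
        have hq0 := pow_mem_nonzeroSquares' (p := p) (r := r) hp (r-2)
          (by rcases hre with ⟨rr, hrr⟩; exact ⟨rr - 1, by omega⟩) (by omega)
        refine ⟨0, 4, by omega, w, ?_, ?_⟩
        · intro t _
          simp only [hw]
          split_ifs
          · exact intsq_mem hp (by omega) α hα
          · exact intsq_mem hp (by omega) β hβ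
          · exact intsq_mem hp (by omega) γ hγ
          · exact hq0
        · rw [hIcc, ← Finset.sum_sdiff (Finset.subset_univ ({t1, t2, t3} : Finset (Fin 5)))]
          have hrest : ∑ t ∈ Finset.univ \ {t1, t2, t3}, w t * x t
              = ((p : ZMod (p^r)))^(r-2) * S := by
            rw [hS, Finset.mul_sum]
            apply Finset.sum_congr rfl
            intro t ht
            simp only [Finset.mem_sdiff, Finset.mem_insert, Finset.mem_singleton] at ht
            simp only [hw]
            rw [if_neg (fun h => ht.2 (Or.inl h)), if_neg (fun h => ht.2 (Or.inr (Or.inl h))),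
              if_neg (fun h => ht.2 (Or.inr (Or.inr h)))]
          have htrip : ∑ t ∈ ({t1, t2, t3} : Finset (Fin 5)), w t * x t
              = ((α : ZMod (p^r)))^2 * x t1 + ((β : ZMod (p^r)))^2 * x t2
                + ((γ : ZMod (p^r)))^2 * x t3 := by
            rw [Finset.sum_insert (by simp [h12, h13]), Finset.sum_pair h23]
            simp only [hw, if_pos rfl, if_neg (Ne.symm h12), if_neg (Ne.symm h13),
              if_neg (Ne.symm h23), eq_self_iff_true, if_true]
            ring
          rw [hrest, htrip, hx1, hx2, hx3]
          push_cast [ZMod.natCast_val, ZMod.cast_id] at hzero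
          have hq0eq : ((p : ZMod (p^r)))^(r-2) = ((p : ZMod (p^r)))^(r-3) * (p : ZMod (p^r)) := by
            rw [← pow_succ]
            congr 1
            omega
          linear_combination hzero + S * hq0eq
  refine ⟨hmain, Nat.sInf_le ⟨by norm_num, hmain⟩⟩
end
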